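/- If z is a complex number with positive real part and t ∈ [0,1], then Re(z^t) ≥ (Re z)^t, where z^t denotes the principal branch of the power. -/

import Mathlib

open Complex

theorem re_cpow_ge (z : ℂ) (hz : 0 < z.re) (t : ℝ) (ht1 : 0 ≤ t) (ht2 : t ≤ 1) :
    (z.re) ^ t ≤ (z ^ (t : ℂ)).re := by
  have hzne : z ≠ 0 := by
    intro h; rw [h] at hz; simp at hz
  have habs : 0 < ‖z‖ := norm_pos_iff.mpr hzne
  set θ := z.arg with hθ
  have hargmem : θ ∈ Set.Icc (-(Real.pi/2)) (Real.pi/2) := by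
    have := Complex.abs_arg_lt_pi_div_two_iff.mpr (Or.inl hz)
    constructor <;> [linarith [abs_lt.mp this]; linarith [abs_lt.mp this]]
  have hcos : Real.cos θ = z.re / ‖z‖ := Complex.cos_arg hzne
  have hcospos : 0 < Real.cos θ := by
    rw [hcos]; positivity
  -- concavity: cos (t*θ) ≥ t * cos θ + (1-t)
  have h0mem : (0:ℝ) ∈ Set.Icc (-(Real.pi/2)) (Real.pi/2) := by
    constructor <;> [linarith [Real.pi_pos]; linarith [Real.pi_pos]]
  have hconc : t * Real.cos θ + (1 - t) * Real.cos 0 ≤ Real.cos (t • θ + (1 - t) • (0:ℝ)) :=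
    strictConcaveOn_cos_Icc.concaveOn.2 hargmem h0mem ht1 (by linarith) (by ring)
  simp only [smul_eq_mul, mul_zero, add_zero, Real.cos_zero, mul_one] at hconc
  -- geom mean
  have hgm : Real.cos θ ^ t * 1 ^ (1 - t) ≤ t * Real.cos θ + (1 - t) * 1 :=
    Real.geom_mean_le_arith_mean2_weighted ht1 (by linarith) hcospos.le zero_le_one (by ring)
  rw [Real.one_rpow, mul_one, mul_one] at hgm
  have hkey : Real.cos θ ^ t ≤ Real.cos (t * θ) := by
    calc Real.cos θ ^ t ≤ t * Real.cos θ + (1 - t) := hgm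
      _ ≤ Real.cos (t * θ) := hconc
  -- compute Re (z ^ t)
  have hre : (z ^ (t:ℂ)).re = ‖z‖ ^ t * Real.cos (t * θ) := by
    rw [Complex.cpow_def_of_ne_zero hzne, Complex.exp_re]
    congr 1
    · rw [Real.rpow_def_of_pos habs]
      congr 1
      simp [Complex.log_re, mul_comm]
    · simp [Complex.log_im, mul_comm, hθ]
  rw [hre]
  have hzre : z.re = ‖z‖ * Real.cos θ := by
    rw [hcos]; field_simp
  rw [hzre, Real.mul_rpow habs.le hcospos.le]
  exact mul_le_mul_of_nonneg_left hkey (Real.rpow_nonneg habs.le t)
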